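/- If Q = M ⊕ N is a block diagonal matrix with M of size m and N of size n, and r, s ⊆ [m+n] are index sets with |r| = |s| = k, then det(Q[r;s]) = det(Q[r∩[m]; s∩[m]]) · det(Q[r∖[m]; s∖[m]]) when |r∩[m]| = |s∩[m]|, and det(Q[r;s]) = 0 otherwise. -/

import Mathlib

open Matrix

section Aux

variable {m n k : ℕ}

lemma card_split_aux (r : Finset (Fin (m + n))) :
    (Finset.univ.filter fun i : Fin m => Fin.castAdd n i ∈ r).card
      + (Finset.univ.filter fun j : Fin n => Fin.natAdd m j ∈ r).card = r.card := by
  rw [← Finset.card_filter_add_card_filter_not (s := r)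
    (p := fun x : Fin (m + n) => (x : ℕ) < m)]
  congr 1
  · apply Finset.card_nbij (fun i => Fin.castAdd n i)
    · intro i hi
      simp only [Finset.mem_coe, Finset.mem_filter, Finset.mem_univ, true_and] at hi ⊢
      exact ⟨hi, i.isLt⟩
    · intro i _ j _ h
      exact Fin.ext (by simpa [Fin.ext_iff] using h)
    · intro x hx
      simp only [Finset.coe_filter, Set.mem_setOf_eq, Finset.mem_coe] at hx
      refine ⟨⟨(x : ℕ), hx.2⟩, ?_, ?_⟩
      · simp only [Finset.coe_filter, Set.mem_setOf_eq, Finset.mem_univ, true_and]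
        have : Fin.castAdd n (⟨(x : ℕ), hx.2⟩ : Fin m) = x := Fin.ext rfl
        rw [this]; exact hx.1
      · exact Fin.ext rfl
  · apply Finset.card_nbij (fun j => Fin.natAdd m j)
    · intro i hi
      simp only [Finset.mem_coe, Finset.mem_filter, Finset.mem_univ, true_and] at hi ⊢
      exact ⟨hi, by simp⟩
    · intro i _ j _ h
      exact Fin.ext (by simpa [Fin.ext_iff] using h)
    · intro x hx
      simp only [Finset.coe_filter, Set.mem_setOf_eq, Finset.mem_coe, not_lt] at hx
      refine ⟨⟨(x : ℕ) - m, by omega⟩, ?_, ?_⟩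
      · simp only [Finset.coe_filter, Set.mem_setOf_eq, Finset.mem_univ, true_and]
        have : Fin.natAdd m (⟨(x : ℕ) - m, by omega⟩ : Fin n) = x := Fin.ext (by simp; omega)
        rw [this]; exact hx.1
      · exact Fin.ext (by simp; omega)

lemma orderEmb_split (r : Finset (Fin (m + n))) (hr : r.card = k)
    {a b : ℕ} (ha : (Finset.univ.filter fun i : Fin m => Fin.castAdd n i ∈ r).card = a)
    (hb : (Finset.univ.filter fun j : Fin n => Fin.natAdd m j ∈ r).card = b)
    (hab : a + b = k) (i : Fin k) :
    r.orderEmbOfFin hr i =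
      if h : (i : ℕ) < a then
        Fin.castAdd n
          ((Finset.univ.filter fun i : Fin m => Fin.castAdd n i ∈ r).orderEmbOfFin ha ⟨i, h⟩)
      else
        Fin.natAdd m
          ((Finset.univ.filter fun j : Fin n => Fin.natAdd m j ∈ r).orderEmbOfFin hb
            ⟨(i : ℕ) - a, by have := i.isLt; omega⟩) := by
  have hmem : ∀ x : Fin k, (if h : (x : ℕ) < a then
        Fin.castAdd n
          ((Finset.univ.filter fun i : Fin m => Fin.castAdd n i ∈ r).orderEmbOfFin ha ⟨x, h⟩)
      else
        Fin.natAdd m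
          ((Finset.univ.filter fun j : Fin n => Fin.natAdd m j ∈ r).orderEmbOfFin hb
            ⟨(x : ℕ) - a, by have := x.isLt; omega⟩)) ∈ r := by
    intro x
    split_ifs with h
    · have := Finset.orderEmbOfFin_mem _ ha ⟨(x : ℕ), h⟩
      simp only [Finset.mem_filter, Finset.mem_univ, true_and] at this
      exact this
    · have := Finset.orderEmbOfFin_mem _ hb ⟨(x : ℕ) - a, by have := x.isLt; omega⟩
      simp only [Finset.mem_filter, Finset.mem_univ, true_and] at this
      exact this
  have hmono : StrictMono (fun x : Fin k => if h : (x : ℕ) < a then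
        Fin.castAdd n
          ((Finset.univ.filter fun i : Fin m => Fin.castAdd n i ∈ r).orderEmbOfFin ha ⟨x, h⟩)
      else
        Fin.natAdd m
          ((Finset.univ.filter fun j : Fin n => Fin.natAdd m j ∈ r).orderEmbOfFin hb
            ⟨(x : ℕ) - a, by have := x.isLt; omega⟩)) := by
    intro x y hxy
    have hxy' : (x : ℕ) < (y : ℕ) := hxy
    dsimp only
    split_ifs with hx hy hy
    · have : (⟨(x : ℕ), hx⟩ : Fin a) < ⟨(y : ℕ), hy⟩ := hxy'
      have h2 := ((Finset.univ.filter fun i : Fin m => Fin.castAdd n i ∈ r).orderEmbOfFin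
        ha).strictMono this
      simp only [Fin.lt_def, Fin.coe_castAdd]
      exact h2
    · have h1 := (((Finset.univ.filter fun i : Fin m => Fin.castAdd n i ∈ r).orderEmbOfFin
        ha) ⟨(x : ℕ), hx⟩).isLt
      simp only [Fin.lt_def, Fin.coe_castAdd, Fin.coe_natAdd]
      omega
    · omega
    · have : (⟨(x : ℕ) - a, by have := x.isLt; omega⟩ : Fin b)
        < ⟨(y : ℕ) - a, by have := y.isLt; omega⟩ := by
        simp only [Fin.mk_lt_mk]; omega
      have := ((Finset.univ.filter fun j : Fin n => Fin.natAdd m j ∈ r).orderEmbOfFin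
        hb).strictMono this
      simp only [Fin.lt_def, Fin.coe_natAdd]
      omega
  exact (congrFun (Finset.orderEmbOfFin_unique hr hmem hmono) i).symm

end Aux

theorem det_submatrix_blockDiagonal {R : Type} [CommRing R] (m n k : ℕ)
    (M : Matrix (Fin m) (Fin m) R) (N : Matrix (Fin n) (Fin n) R)
    (r s : Finset (Fin (m + n))) (hr : r.card = k) (hs : s.card = k) :
    let Q : Matrix (Fin (m + n)) (Fin (m + n)) R :=
      (Matrix.fromBlocks M 0 0 N).submatrix finSumFinEquiv.symm finSumFinEquiv.symm
    let r₁ : Finset (Fin m) := Finset.univ.filter fun i => Fin.castAdd n i ∈ r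
    let s₁ : Finset (Fin m) := Finset.univ.filter fun i => Fin.castAdd n i ∈ s
    let r₂ : Finset (Fin n) := Finset.univ.filter fun j => Fin.natAdd m j ∈ r
    let s₂ : Finset (Fin n) := Finset.univ.filter fun j => Fin.natAdd m j ∈ s
    (∀ (e1 : s₁.card = r₁.card) (e2 : s₂.card = r₂.card),
      (Q.submatrix (⇑(r.orderEmbOfFin hr)) (⇑(s.orderEmbOfFin hs))).det
        = (M.submatrix (⇑(r₁.orderEmbOfFin rfl)) (⇑(s₁.orderEmbOfFin e1))).det
          * (N.submatrix (⇑(r₂.orderEmbOfFin rfl)) (⇑(s₂.orderEmbOfFin e2))).det) ∧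
    (r₁.card ≠ s₁.card →
      (Q.submatrix (⇑(r.orderEmbOfFin hr)) (⇑(s.orderEmbOfFin hs))).det = 0) := by
  intro Q r₁ s₁ r₂ s₂
  have hr12 : r₁.card + r₂.card = k := by rw [← hr]; exact card_split_aux r
  have hs12 : s₁.card + s₂.card = k := by rw [← hs]; exact card_split_aux s
  have hchar_r : ∀ x : Fin k, ((r.orderEmbOfFin hr x : ℕ) < m ↔ (x : ℕ) < r₁.card) := by
    intro x
    rw [orderEmb_split r hr rfl rfl hr12 x]
    split_ifs with h
    · simp only [Fin.coe_castAdd]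
      exact iff_of_true (Fin.is_lt _) h
    · exact iff_of_false (by simp) h
  have hchar_s : ∀ x : Fin k, ((s.orderEmbOfFin hs x : ℕ) < m ↔ (x : ℕ) < s₁.card) := by
    intro x
    rw [orderEmb_split s hs rfl rfl hs12 x]
    split_ifs with h
    · simp only [Fin.coe_castAdd]
      exact iff_of_true (Fin.is_lt _) h
    · exact iff_of_false (by simp) h
  have hQ0 : ∀ x y : Fin (m + n), ¬(((x : ℕ) < m) ↔ ((y : ℕ) < m)) → Q x y = 0 := by
    intro x y hxy
    obtain ⟨x', rfl⟩ := finSumFinEquiv.surjective x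
    obtain ⟨y', rfl⟩ := finSumFinEquiv.surjective y
    cases x' with
    | inl x' =>
      cases y' with
      | inl y' => exact absurd (by simp) hxy
      | inr y' => simp [Q]
    | inr x' =>
      cases y' with
      | inl y' => simp [Q]
      | inr y' =>
        refine absurd ?_ hxy
        simp only [finSumFinEquiv_apply_left, finSumFinEquiv_apply_right, Fin.coe_castAdd,
          Fin.coe_natAdd]
        omega
  constructor
  · intro e1 e2
    set e : Fin r₁.card ⊕ Fin r₂.card ≃ Fin k := finSumFinEquiv.trans (finCongr hr12) with he
    rw [← Matrix.det_submatrix_equiv_self e]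
    have heq : ((Q.submatrix (⇑(r.orderEmbOfFin hr)) (⇑(s.orderEmbOfFin hs))).submatrix e e)
        = Matrix.fromBlocks
            (M.submatrix (⇑(r₁.orderEmbOfFin rfl)) (⇑(s₁.orderEmbOfFin e1))) 0 0
            (N.submatrix (⇑(r₂.orderEmbOfFin rfl)) (⇑(s₂.orderEmbOfFin e2))) := by
      have hevl : ∀ x : Fin r₁.card, ((e (Sum.inl x) : ℕ)) = (x : ℕ) := by
        intro x; simp [he]
      have hevr : ∀ x : Fin r₂.card, ((e (Sum.inr x) : ℕ)) = r₁.card + (x : ℕ) := by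
        intro x; simp [he]
      ext x y
      cases x with
      | inl x =>
        cases y with
        | inl y =>
          have hx : ((e (Sum.inl x)) : ℕ) < r₁.card := by rw [hevl]; exact x.isLt
          have hy : ((e (Sum.inl y)) : ℕ) < r₁.card := by rw [hevl]; exact y.isLt
          simp only [Matrix.submatrix_apply, Matrix.fromBlocks_apply₁₁]
          rw [orderEmb_split r hr rfl rfl hr12, orderEmb_split s hs e1 e2 hr12,
            dif_pos hx, dif_pos hy]
          simp only [Q, Matrix.submatrix_apply, finSumFinEquiv_symm_apply_castAdd,
            Matrix.fromBlocks_apply₁₁]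
          congr 2 <;> exact Fin.ext (by simp [hevl])
        | inr y =>
          have hx : ((e (Sum.inl x)) : ℕ) < r₁.card := by rw [hevl]; exact x.isLt
          have hy : ¬ ((e (Sum.inr y)) : ℕ) < r₁.card := by rw [hevr]; omega
          simp only [Matrix.submatrix_apply, Matrix.fromBlocks_apply₁₂, Matrix.zero_apply]
          rw [orderEmb_split r hr rfl rfl hr12, orderEmb_split s hs e1 e2 hr12,
            dif_pos hx, dif_neg hy]
          simp [Q]
      | inr x =>
        cases y with
        | inl y =>
          have hx : ¬ ((e (Sum.inr x)) : ℕ) < r₁.card := by rw [hevr]; omega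
          have hy : ((e (Sum.inl y)) : ℕ) < r₁.card := by rw [hevl]; exact y.isLt
          simp only [Matrix.submatrix_apply, Matrix.fromBlocks_apply₂₁, Matrix.zero_apply]
          rw [orderEmb_split r hr rfl rfl hr12, orderEmb_split s hs e1 e2 hr12,
            dif_neg hx, dif_pos hy]
          simp [Q]
        | inr y =>
          have hx : ¬ ((e (Sum.inr x)) : ℕ) < r₁.card := by rw [hevr]; omega
          have hy : ¬ ((e (Sum.inr y)) : ℕ) < r₁.card := by rw [hevr]; omega
          simp only [Matrix.submatrix_apply, Matrix.fromBlocks_apply₂₂]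
          rw [orderEmb_split r hr rfl rfl hr12, orderEmb_split s hs e1 e2 hr12,
            dif_neg hx, dif_neg hy]
          simp only [Q, Matrix.submatrix_apply, finSumFinEquiv_symm_apply_natAdd,
            Matrix.fromBlocks_apply₂₂]
          congr 2 <;> exact Fin.ext (by simp [hevl, hevr, r₁])
    rw [heq, Matrix.det_fromBlocks_zero₁₂]
  · intro hne
    have hcard : ∀ c, c ≤ k →
        (Finset.univ.filter fun i : Fin k => (i : ℕ) < c).card = c := by
      intro c hc
      have : (Finset.univ.filter fun i : Fin k => (i : ℕ) < c)
          = Finset.map (Fin.castLEEmb hc) Finset.univ := by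
        ext i
        simp only [Finset.mem_filter, Finset.mem_univ, true_and, Finset.mem_map,
          Fin.castLEEmb_apply]
        constructor
        · intro h; exact ⟨⟨(i : ℕ), h⟩, Fin.ext rfl⟩
        · rintro ⟨j, rfl⟩; exact j.isLt
      rw [this, Finset.card_map, Finset.card_univ, Fintype.card_fin]
    rw [Matrix.det_apply]
    apply Finset.sum_eq_zero
    intro σ _
    have hex : ∃ i : Fin k,
        (Q.submatrix (⇑(r.orderEmbOfFin hr)) (⇑(s.orderEmbOfFin hs))) (σ i) i = 0 := by
      by_contra h
      push_neg at h
      have hiff : ∀ i : Fin k, ((σ i : ℕ) < r₁.card ↔ (i : ℕ) < s₁.card) := by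
        intro i
        by_contra hif
        apply h i
        show Q (r.orderEmbOfFin hr (σ i)) (s.orderEmbOfFin hs i) = 0
        apply hQ0
        rw [hchar_r, hchar_s]
        exact hif
      have hA : (Finset.univ.filter fun i : Fin k => (i : ℕ) < r₁.card).card = r₁.card :=
        hcard _ (by omega)
      have hA' : (Finset.univ.filter fun i : Fin k => (i : ℕ) < s₁.card).card = s₁.card :=
        hcard _ (by omega)
      have : s₁.card = r₁.card := by
        rw [← hA, ← hA']
        apply Finset.card_nbij (fun i => σ i)
        · intro i hi
          simp only [Finset.mem_coe, Finset.mem_filter, Finset.mem_univ, true_and] at hi ⊢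
          exact (hiff i).mpr hi
        · intro i _ j _ hij
          exact σ.injective hij
        · intro j hj
          simp only [Finset.coe_filter, Set.mem_setOf_eq, Finset.mem_univ, true_and] at hj ⊢
          refine ⟨σ.symm j, ?_, by simp⟩
          have := (hiff (σ.symm j)).mp (by simpa using hj)
          simpa using this
      exact hne this.symm
    obtain ⟨i, hi⟩ := hex
    have h0 : (∏ j : Fin k,
        (Q.submatrix (⇑(r.orderEmbOfFin hr)) (⇑(s.orderEmbOfFin hs))) (σ j) j) = 0 :=
      Finset.prod_eq_zero (Finset.mem_univ i) hi
    rw [h0, smul_zero]
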